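/- Conformal coverage bound (upper bound): let U₁, …, U_{n+1} be exchangeable real-valued random variables that are almost surely distinct, α ∈ (0,1), and let τ be the ⌈(1−α)(n+1)⌉-th smallest value among U₁, …, U_n. Then ℙ(U_{n+1} ≤ τ) < 1 − α + 1/(n+1). -/

import Mathlib

open MeasureTheory

/-- The `k`-th smallest element (1-indexed) of a finite multiset of reals. -/
noncomputable def kthSmallest (s : Multiset ℝ) (k : ℕ) : ℝ :=
  (s.sort (· ≤ ·)).getD (k - 1) 0

open Finset ENNReal

-- rank function
private noncomputable def rnk {m : ℕ} (x : Fin m → ℝ) (j : Fin m) : ℕ :=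
  (Finset.univ.filter fun i => x i ≤ x j).card

private lemma rnk_pos {m : ℕ} (x : Fin m → ℝ) (j : Fin m) : 1 ≤ rnk x j :=
  Finset.card_pos.2 ⟨j, by simp [rnk]⟩

private lemma rnk_inj {m : ℕ} (x : Fin m → ℝ) (hx : Function.Injective x) :
    Function.Injective (rnk x) := by
  have key : ∀ a b : Fin m, x a < x b → rnk x a < rnk x b := by
    intro a b hab
    apply Finset.card_lt_card
    constructor
    · intro i hi
      simp only [mem_filter, mem_univ, true_and] at hi ⊢
      exact le_trans hi (le_of_lt hab)
    · intro hsub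
      have := hsub (by simp : b ∈ Finset.univ.filter fun i => x i ≤ x b)
      simp only [mem_filter] at this
      exact absurd this.2 (not_le.2 hab)
  intro a b hab
  by_contra hne
  rcases lt_trichotomy (x a) (x b) with h | h | h
  · exact absurd hab (key a b h).ne
  · exact hne (hx h)
  · exact absurd hab.symm (key b a h).ne

private lemma card_rnk_le {m : ℕ} (x : Fin m → ℝ) (hx : Function.Injective x) (k : ℕ) :
    (Finset.univ.filter fun j => rnk x j ≤ k).card ≤ k := by
  have : (Finset.univ.filter fun j => rnk x j ≤ k).card ≤ (Finset.Icc 1 k).card := by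
    apply Finset.card_le_card_of_injOn (rnk x)
    · intro j hj
      simp only [coe_filter, mem_filter, Set.mem_setOf_eq] at hj
      exact Finset.mem_Icc.2 ⟨rnk_pos x j, hj.2⟩
    · exact fun a _ b _ h => rnk_inj x hx h
  simpa [Nat.card_Icc] using this

private lemma rank_le_of_le_kth {n : ℕ} (x : Fin (n+1) → ℝ) (hx : Function.Injective x)
    (k : ℕ) (hk1 : 1 ≤ k) (hkn : k ≤ n)
    (h : x (Fin.last n) ≤ kthSmallest
      (Multiset.map (fun i : Fin n => x i.castSucc) Finset.univ.val) k) :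
    rnk x (Fin.last n) ≤ k := by
  set t := x (Fin.last n) with ht
  set s := Multiset.map (fun i : Fin n => x i.castSucc) Finset.univ.val with hs
  set l := s.sort (· ≤ ·) with hl
  have hlen : l.length = n := by simp [hl, hs]
  have hkl : k - 1 < l.length := by omega
  have hget : kthSmallest s k = l.get ⟨k - 1, hkl⟩ := by
    rw [kthSmallest]
    rw [List.getD_eq_getElem _ _ hkl]
    rfl
  have hsort : l.Pairwise (· ≤ ·) := Multiset.pairwise_sort _ _
  -- all elements of the drop are ≥ t
  have hdrop : ∀ a ∈ l.drop (k - 1), ¬ a < t := by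
    intro a ha
    rw [List.mem_iff_get] at ha
    obtain ⟨i, hi⟩ := ha
    replace hi : l.get ⟨k - 1 + i.1, by
        have := i.2; simp [List.length_drop] at this; omega⟩ = a := by
      rw [← hi]; simp
    have : l.get ⟨k - 1, hkl⟩ ≤ l.get ⟨k - 1 + i.1, by
        have := i.2; simp [List.length_drop] at this; omega⟩ := by
      apply hsort.rel_get_of_le
      simp [Fin.le_def]
    rw [hi] at this
    rw [hget] at h
    exact not_lt.2 (le_trans h this)
  -- count of elements < t is at most k - 1
  have hcount : (l.filter (fun a => decide (a < t))).length ≤ k - 1 := by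
    conv_lhs => rw [← List.take_append_drop (k - 1) l]
    rw [List.filter_append]
    have hnil : (l.drop (k - 1)).filter (fun a => decide (a < t)) = [] := by
      rw [List.filter_eq_nil_iff]
      intro a ha
      simpa using hdrop a ha
    rw [hnil, List.append_nil]
    calc ((l.take (k - 1)).filter _).length ≤ (l.take (k - 1)).length :=
          List.length_filter_le _ _
      _ ≤ k - 1 := by simp [List.length_take]
  -- identify the count with the cardinality over Fin n
  have hcard : (Finset.univ.filter fun i : Fin n => x i.castSucc < t).card
      = (l.filter (fun a => decide (a < t))).length := by
    have h1 : (Finset.univ.filter fun i : Fin n => x i.castSucc < t).card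
        = Multiset.countP (fun a => a < t) s := by
      rw [hs, Multiset.countP_map]
      rfl
    rw [h1]
    have : (l : Multiset ℝ) = s := Multiset.sort_eq _ _
    rw [← this]
    rw [Multiset.coe_countP, List.countP_eq_length_filter]
  -- split the rank
  have hsplit : rnk x (Fin.last n)
      = (Finset.univ.filter fun i : Fin n => x i.castSucc < t).card + 1 := by
    rw [rnk, Finset.card_filter, Finset.card_filter, Fin.sum_univ_castSucc]
    simp only [← ht, if_pos le_rfl]
    congr 1
    apply Finset.sum_congr rfl
    intro i _
    congr 1
    have hne : x i.castSucc ≠ t := fun hEq =>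
      absurd (hx hEq) (Fin.castSucc_lt_last i).ne
    simp only [eq_iff_iff]
    exact ⟨fun h' => lt_of_le_of_ne h' hne, le_of_lt⟩
  omega

theorem conformal_coverage_upper_bound
    {Ω : Type*} [MeasurableSpace Ω] (μ : Measure Ω) [IsProbabilityMeasure μ]
    (n : ℕ) (U : Fin (n + 1) → Ω → ℝ) (hU : ∀ i, Measurable (U i))
    (hexch : ∀ σ : Equiv.Perm (Fin (n + 1)),
      Measure.map (fun ω i => U (σ i) ω) μ = Measure.map (fun ω i => U i ω) μ)
    (hdistinct : ∀ i j : Fin (n + 1), i ≠ j → μ {ω | U i ω = U j ω} = 0)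
    (α : ℝ) (hα0 : 0 < α) (hα1 : α < 1)
    (k : ℕ) (hk : k = ⌈(1 - α) * (n + 1)⌉₊) (hkn : k ≤ n)
    (τ : Ω → ℝ)
    (hτ : ∀ ω, τ ω = kthSmallest
      (Multiset.map (fun i : Fin n => U i.castSucc ω) Finset.univ.val) k) :
    μ {ω | U (Fin.last n) ω ≤ τ ω} < ENNReal.ofReal (1 - α + 1 / (n + 1)) := by
  classical
  set V : Ω → Fin (n + 1) → ℝ := fun ω i => U i ω with hV
  have hVmeas : Measurable V := measurable_pi_lambda _ hU
  set D : Set Ω := ⋃ (i : Fin (n + 1)) (j : Fin (n + 1)) (_ : i ≠ j),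
    {ω | U i ω = U j ω} with hD
  have hDmeas : MeasurableSet D := by
    refine MeasurableSet.iUnion fun i => MeasurableSet.iUnion fun j =>
      MeasurableSet.iUnion fun _ => measurableSet_eq_fun (hU i) (hU j)
  have hDnull : μ D = 0 :=
    measure_iUnion_null fun i => measure_iUnion_null fun j =>
      measure_iUnion_null fun h => hdistinct i j h
  have hInj : ∀ ω, ω ∉ D → Function.Injective fun i => U i ω := by
    intro ω hω i j hij
    by_contra hne
    exact hω (Set.mem_iUnion.2 ⟨i, Set.mem_iUnion.2 ⟨j, Set.mem_iUnion.2 ⟨hne, hij⟩⟩⟩)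
  have hk1 : 1 ≤ k := by
    rw [hk]
    rw [Nat.one_le_iff_ne_zero, ← Nat.pos_iff_ne_zero, Nat.ceil_pos]
    have h1 : (0:ℝ) < 1 - α := by linarith
    positivity
  set A : Fin (n + 1) → Set (Fin (n + 1) → ℝ) := fun j => {x | rnk x j ≤ k} with hA
  have hAmeas : ∀ j, MeasurableSet (A j) := by
    intro j
    have hr : Measurable fun x : Fin (n + 1) → ℝ => rnk x j := by
      have heq : (fun x : Fin (n + 1) → ℝ => rnk x j)
          = fun x => ∑ i : Fin (n + 1), if x i ≤ x j then 1 else 0 := by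
        funext x; rw [rnk, Finset.card_filter]
      rw [heq]
      exact Finset.measurable_sum _ fun i _ =>
        Measurable.ite (measurableSet_le (measurable_pi_apply i) (measurable_pi_apply j))
          measurable_const measurable_const
    exact hr measurableSet_Iic
  set E : Fin (n + 1) → Set Ω := fun j => V ⁻¹' A j with hE
  have hEmeas : ∀ j, MeasurableSet (E j) := fun j => hVmeas (hAmeas j)
  have hEeq : ∀ j, μ (E j) = μ (E (Fin.last n)) := by
    intro j
    set σ : Equiv.Perm (Fin (n + 1)) := Equiv.swap j (Fin.last n) with hσ
    have hg : Measurable fun x : Fin (n + 1) → ℝ => fun i => x (σ i) :=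
      measurable_pi_lambda _ fun i => measurable_pi_apply _
    have hcomp : (fun ω i => U (σ i) ω)
        = (fun x : Fin (n + 1) → ℝ => fun i => x (σ i)) ∘ V := rfl
    have hpre : (fun x : Fin (n + 1) → ℝ => fun i => x (σ i)) ⁻¹' A (Fin.last n) = A j := by
      ext x
      simp only [Set.mem_preimage, hA, Set.mem_setOf_eq]
      have hσlast : σ (Fin.last n) = j := Equiv.swap_apply_right _ _
      have hcardeq : rnk (fun i => x (σ i)) (Fin.last n) = rnk x j := by
        rw [rnk, rnk, hσlast]
        exact Finset.card_equiv σ (fun i => by simp)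
      rw [hcardeq]
    have key : Measure.map ((fun x : Fin (n + 1) → ℝ => fun i => x (σ i)) ∘ V) μ
        (A (Fin.last n)) = Measure.map V μ (A (Fin.last n)) := by
      rw [← hcomp, hexch σ]
    rw [Measure.map_apply (hg.comp hVmeas) (hAmeas _),
      Measure.map_apply hVmeas (hAmeas _), Set.preimage_comp, hpre] at key
    exact key
  have hEcap : ∀ j, μ (E j) = μ (E j ∩ Dᶜ) := by
    intro j
    exact (measure_inter_conull (by rwa [compl_compl])).symm
  have hsum : ∑ j : Fin (n + 1), μ (E j ∩ Dᶜ) ≤ (k : ℝ≥0∞) := by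
    have hmeas : ∀ j : Fin (n + 1), MeasurableSet (E j ∩ Dᶜ) := fun j =>
      (hEmeas j).inter hDmeas.compl
    calc ∑ j : Fin (n + 1), μ (E j ∩ Dᶜ)
        = ∑ j : Fin (n + 1), ∫⁻ ω, (E j ∩ Dᶜ).indicator (fun _ => (1 : ℝ≥0∞)) ω ∂μ := by
          refine Finset.sum_congr rfl fun j _ => ?_
          rw [lintegral_indicator (hmeas j)]
          simp
      _ = ∫⁻ ω, ∑ j : Fin (n + 1), (E j ∩ Dᶜ).indicator (fun _ => (1 : ℝ≥0∞)) ω ∂μ :=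
          (lintegral_finset_sum _ fun j _ => measurable_const.indicator (hmeas j)).symm
      _ ≤ ∫⁻ _, (k : ℝ≥0∞) ∂μ := by
          refine lintegral_mono fun ω => ?_
          have hform : ∑ j : Fin (n + 1), (E j ∩ Dᶜ).indicator (fun _ => (1 : ℝ≥0∞)) ω
              = ((Finset.univ.filter fun j : Fin (n + 1) => ω ∈ E j ∩ Dᶜ).card : ℝ≥0∞) := by
            rw [← Finset.sum_boole]
            refine Finset.sum_congr rfl fun j _ => ?_
            rw [Set.indicator_apply]
          rw [hform]
          by_cases hω : ω ∈ D
          · have hemp : (Finset.univ.filter fun j : Fin (n + 1) => ω ∈ E j ∩ Dᶜ) = ∅ :=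
              Finset.filter_eq_empty_iff.2 fun _ _ hmem => hmem.2 hω
            rw [hemp]
            simp
          · have hfilt : (Finset.univ.filter fun j : Fin (n + 1) => ω ∈ E j ∩ Dᶜ)
                = Finset.univ.filter fun j => rnk (V ω) j ≤ k := by
              refine Finset.filter_congr fun j _ => ?_
              simp only [Set.mem_inter_iff, Set.mem_compl_iff]
              constructor
              · rintro ⟨hj, _⟩; exact hj
              · intro hj; exact ⟨hj, hω⟩
            rw [hfilt]
            exact (Nat.cast_le (α := ℝ≥0∞)).2 (card_rnk_le (V ω) (hInj ω hω) k)
      _ = (k : ℝ≥0∞) := by simp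
  have hsum' : ∑ j : Fin (n + 1), μ (E j) ≤ (k : ℝ≥0∞) := by
    calc ∑ j : Fin (n + 1), μ (E j) = ∑ j : Fin (n + 1), μ (E j ∩ Dᶜ) :=
          Finset.sum_congr rfl fun j _ => hEcap j
      _ ≤ _ := hsum
  have hlast : μ (E (Fin.last n)) * (n + 1) ≤ (k : ℝ≥0∞) := by
    calc μ (E (Fin.last n)) * (n + 1) = ∑ _j : Fin (n + 1), μ (E (Fin.last n)) := by
          rw [Finset.sum_const, Finset.card_univ, Fintype.card_fin, nsmul_eq_mul, mul_comm]
          push_cast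
          ring
      _ = ∑ j : Fin (n + 1), μ (E j) := Finset.sum_congr rfl fun j _ => (hEeq j).symm
      _ ≤ _ := hsum'
  have hlast' : μ (E (Fin.last n)) ≤ (k : ℝ≥0∞) / ((n : ℝ≥0∞) + 1) := by
    rw [ENNReal.le_div_iff_mul_le (by simp) (by simp)]
    exact hlast
  have hincl : {ω | U (Fin.last n) ω ≤ τ ω} ⊆ E (Fin.last n) ∪ D := by
    intro ω hω
    by_cases hωD : ω ∈ D
    · exact Or.inr hωD
    · left
      have hr := rank_le_of_le_kth (fun i => U i ω) (hInj ω hωD) k hk1 hkn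
        (by rw [← hτ ω]; exact hω)
      exact hr
  have hmain : μ {ω | U (Fin.last n) ω ≤ τ ω} ≤ (k : ℝ≥0∞) / ((n : ℝ≥0∞) + 1) := by
    calc μ {ω | U (Fin.last n) ω ≤ τ ω} ≤ μ (E (Fin.last n) ∪ D) := measure_mono hincl
      _ ≤ μ (E (Fin.last n)) + μ D := measure_union_le _ _
      _ = μ (E (Fin.last n)) := by rw [hDnull, add_zero]
      _ ≤ _ := hlast'
  refine lt_of_le_of_lt hmain ?_
  have hpos : (0:ℝ) < (n : ℝ) + 1 := by positivity
  have hnk : (k : ℝ) / ((n : ℝ) + 1) < 1 - α + 1 / ((n : ℝ) + 1) := by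
    have hceil : (k : ℝ) < (1 - α) * ((n : ℝ) + 1) + 1 := by
      rw [hk]
      have h1 : (0:ℝ) ≤ (1 - α) * ((n : ℝ) + 1) := by nlinarith
      exact_mod_cast Nat.ceil_lt_add_one h1
    rw [div_lt_iff₀ hpos]
    have heq : (1 - α + 1 / ((n : ℝ) + 1)) * ((n : ℝ) + 1) = (1 - α) * ((n : ℝ) + 1) + 1 := by
      field_simp
    rw [heq]
    exact hceil
  have hconv : (k : ℝ≥0∞) / ((n : ℝ≥0∞) + 1) = ENNReal.ofReal ((k : ℝ) / ((n : ℝ) + 1)) := by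
    rw [ENNReal.ofReal_div_of_pos hpos]
    congr 1
    · exact (ENNReal.ofReal_natCast k).symm
    · rw [ENNReal.ofReal_add (by positivity) zero_le_one]
      simp [ENNReal.ofReal_natCast]
  rw [hconv]
  have hpos2 : (0:ℝ) < 1 - α + 1 / ((n : ℝ) + 1) := by
    have h2 : (0:ℝ) < 1 / ((n : ℝ) + 1) := by positivity
    linarith
  exact (ENNReal.ofReal_lt_ofReal_iff hpos2).2 hnk
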